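/- Let q : ℝ → ℝ be a C² 2π-periodic function whose Fourier coefficients aₙ, bₙ vanish for all even n ≥ 2 (i.e. q(φ) + q(φ+π) is constant). Then W_{q'} ≥ 9 W_q + (9/(2π))(∫₀^{2π} q dφ)². -/

import Mathlib

open Real MeasureTheory Set intervalIntegral

noncomputable section WirtingerHelpers

instance fact2pi : Fact (0 < 2 * Real.pi) := ⟨by positivity⟩

def clift (g : ℝ → ℝ) : AddCircle (2 * Real.pi) → ℂ :=
  AddCircle.liftIco (2 * Real.pi) 0 (fun x => (g x : ℂ))

lemma clift_coe {g : ℝ → ℝ} (hg : Function.Periodic g (2 * Real.pi)) (x : ℝ) :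
    clift g (x : ℝ) = g x := by
  have hp : (0:ℝ) < 2 * Real.pi := two_pi_pos
  set y := toIcoMod hp 0 x with hy
  have hmem : y ∈ Ico (0:ℝ) (0 + 2 * Real.pi) := toIcoMod_mem_Ico hp 0 x
  have hcoe : ((y : ℝ) : AddCircle (2 * Real.pi)) = (x : AddCircle (2 * Real.pi)) := by
    rw [hy, toIcoMod, QuotientAddGroup.mk_sub]
    have : ((toIcoDiv hp 0 x • (2 * Real.pi) : ℝ) : AddCircle (2 * Real.pi)) = 0 := by
      rw [QuotientAddGroup.eq_zero_iff]
      exact AddSubgroup.zsmul_mem _ (AddSubgroup.mem_zmultiples _) _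
    rw [this, sub_zero]
  have h1 : clift g ((y : ℝ) : AddCircle (2 * Real.pi)) = (g y : ℂ) :=
    AddCircle.liftIco_coe_apply hmem
  rw [hcoe] at h1
  rw [h1, hy, toIcoMod]
  norm_cast
  exact hg.sub_zsmul_eq _
lemma clift_continuous {g : ℝ → ℝ} (hc : Continuous g)
    (hg : Function.Periodic g (2 * Real.pi)) : Continuous (clift g) := by
  apply AddCircle.liftIco_zero_continuous
  · norm_cast; exact (hg 0).symm.trans (by rw [zero_add])
  · exact (Complex.continuous_ofReal.comp hc).continuousOn

lemma fourierCoeff_clift {g : ℝ → ℝ} (hg : Function.Periodic g (2 * Real.pi)) (n : ℤ) :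
    fourierCoeff (clift g) n =
      (1 / (2 * Real.pi) : ℂ) * ∫ x in (0:ℝ)..(2 * Real.pi),
        Complex.exp (-(Complex.I * n * x)) * g x := by
  rw [fourierCoeff_eq_intervalIntegral (clift g) n 0, zero_add]
  have h : EqOn (fun x : ℝ => fourier (-n) (x : AddCircle (2 * Real.pi)) • clift g x)
      (fun x : ℝ => Complex.exp (-(Complex.I * n * x)) * (g x : ℂ))
      (uIcc (0:ℝ) (2 * Real.pi)) := by
    intro x _
    simp only [smul_eq_mul]
    rw [clift_coe hg x, fourier_coe_apply]
    congr 2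
    have hπ : (Real.pi : ℂ) ≠ 0 := Complex.ofReal_ne_zero.mpr Real.pi_ne_zero
    push_cast
    field_simp
  rw [intervalIntegral.integral_congr h, Complex.real_smul]
  push_cast
  ring_nf
lemma parseval_clift {g : ℝ → ℝ} (hc : Continuous g)
    (hg : Function.Periodic g (2 * Real.pi)) :
    Summable (fun n : ℤ => ‖fourierCoeff (clift g) n‖ ^ 2) ∧
      (∫ x in (0:ℝ)..(2 * Real.pi), g x ^ 2) =
        (2 * Real.pi) * ∑' n : ℤ, ‖fourierCoeff (clift g) n‖ ^ 2 := by
  set G : C(AddCircle (2 * Real.pi), ℂ) := ⟨clift g, clift_continuous hc hg⟩ with hG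
  set P := ContinuousMap.toLp (E := ℂ) 2 AddCircle.haarAddCircle ℂ G with hP
  have hcoeff : ∀ n, fourierCoeff (P : AddCircle (2 * Real.pi) → ℂ) n
      = fourierCoeff (clift g) n := fun n => fourierCoeff_toLp G n
  -- summability
  have hsum : Summable (fun n : ℤ => ‖fourierCoeff (clift g) n‖ ^ 2) := by
    have hmem := (fourierBasis.repr P).property
    have := (memℓp_gen_iff (by norm_num : (0:ℝ) < (2 : ENNReal).toReal)).mp hmem
    refine this.congr fun n => ?_
    rw [fourierBasis_repr, hcoeff n]
    rw [show ((2:ENNReal).toReal) = ((2:ℕ):ℝ) by norm_num, Real.rpow_natCast]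
  refine ⟨hsum, ?_⟩
  -- Parseval
  have hpar := tsum_sq_fourierCoeff P
  simp_rw [hcoeff] at hpar
  -- convert measure integral
  have h1 : ∫ t : AddCircle (2 * Real.pi), ‖P t‖ ^ 2 ∂AddCircle.haarAddCircle
      = ∫ t : AddCircle (2 * Real.pi), ‖clift g t‖ ^ 2 ∂AddCircle.haarAddCircle := by
    apply MeasureTheory.integral_congr_ae
    filter_upwards [ContinuousMap.coeFn_toLp (p := 2) AddCircle.haarAddCircle (𝕜 := ℂ) G]
      with t ht
    rw [ht]; rfl
  have h2 : ∫ t : AddCircle (2 * Real.pi), ‖clift g t‖ ^ 2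
        ∂(volume : Measure (AddCircle (2 * Real.pi)))
      = (2 * Real.pi) * ∫ t : AddCircle (2 * Real.pi), ‖clift g t‖ ^ 2
        ∂AddCircle.haarAddCircle := by
    rw [AddCircle.volume_eq_smul_haarAddCircle, MeasureTheory.integral_smul_measure _ _,
      ENNReal.toReal_ofReal (by positivity), smul_eq_mul]
  have h3 : (∫ x in (0:ℝ)..(0 + 2 * Real.pi), ‖clift g (x : ℝ)‖ ^ 2)
      = ∫ t : AddCircle (2 * Real.pi), ‖clift g t‖ ^ 2 ∂volume :=
    AddCircle.intervalIntegral_preimage (2 * Real.pi) 0 (fun t => ‖clift g t‖ ^ 2)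
  rw [hpar, h1, ← h2, ← h3]
  rw [zero_add]
  apply intervalIntegral.integral_congr
  intro x _
  simp [clift_coe hg x, Complex.norm_real, sq_abs]
lemma periodic_deriv_of_periodic {g : ℝ → ℝ} (h : Function.Periodic g (2 * Real.pi)) :
    Function.Periodic (deriv g) (2 * Real.pi) := by
  intro x
  have hfun : (fun y => g (y + 2 * Real.pi)) = g := funext h
  rw [← deriv_comp_add_const g (2 * Real.pi) x, hfun]
lemma fourierCoeff_clift_deriv {g : ℝ → ℝ} (hdg : Differentiable ℝ g)
    (hper : Function.Periodic g (2 * Real.pi)) (hc' : Continuous (deriv g)) (n : ℤ) :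
    fourierCoeff (clift (deriv g)) n = Complex.I * n * fourierCoeff (clift g) n := by
  have hper' := periodic_deriv_of_periodic hper
  rw [fourierCoeff_clift hper' n, fourierCoeff_clift hper n]
  have hu : ∀ x ∈ uIcc (0:ℝ) (2 * Real.pi),
      HasDerivAt (fun y : ℝ => Complex.exp (-(Complex.I * n * y)))
        (-(Complex.I * n) * Complex.exp (-(Complex.I * n * x))) x := by
    intro x _
    have h1 : HasDerivAt (fun z : ℂ => Complex.exp (-(Complex.I * n * z)))
        (-(Complex.I * n) * Complex.exp (-(Complex.I * n * (x:ℂ)))) (x : ℂ) := by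
      have h0 : HasDerivAt (fun z : ℂ => -(Complex.I * n * z)) (-(Complex.I * n)) (x : ℂ) := by
        simpa using ((hasDerivAt_id (x:ℂ)).const_mul (-(Complex.I * (n:ℂ))))
      simpa [mul_comm] using h0.cexp
    exact h1.comp_ofReal
  have hv : ∀ x ∈ uIcc (0:ℝ) (2 * Real.pi),
      HasDerivAt (fun y : ℝ => ((g y : ℂ))) (((deriv g x : ℝ) : ℂ)) x := by
    intro x _
    exact ((hdg x).hasDerivAt).ofReal_comp
  have hu' : IntervalIntegrable (fun x : ℝ => -(Complex.I * n) *
      Complex.exp (-(Complex.I * n * x))) volume 0 (2 * Real.pi) := by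
    apply Continuous.intervalIntegrable
    fun_prop
  have hv' : IntervalIntegrable (fun x : ℝ => (((deriv g x : ℝ) : ℂ))) volume 0 (2 * Real.pi) := by
    apply Continuous.intervalIntegrable
    fun_prop
  have key := intervalIntegral.integral_mul_deriv_eq_deriv_mul hu hv hu' hv'
  have hexp : Complex.exp (-(Complex.I * n * ((2 * Real.pi : ℝ) : ℂ))) = 1 := by
    rw [show (-(Complex.I * n * ((2 * Real.pi : ℝ) : ℂ))) = ((-n : ℤ) : ℂ) * (2 * (Real.pi:ℂ) * Complex.I) by push_cast; ring]
    exact Complex.exp_int_mul_two_pi_mul_I (-n)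
  have hg2π : g (2 * Real.pi) = g 0 := by simpa using hper 0
  rw [key]
  rw [show ((0:ℝ):ℂ) = (0:ℂ) by norm_cast]
  simp only [mul_zero, neg_zero, Complex.exp_zero, one_mul]
  rw [hexp, hg2π]
  have : (∫ x in (0:ℝ)..(2 * Real.pi),
      -(Complex.I * n) * Complex.exp (-(Complex.I * n * x)) * (g x : ℂ))
      = -(Complex.I * n) * ∫ x in (0:ℝ)..(2 * Real.pi),
          Complex.exp (-(Complex.I * n * x)) * (g x : ℂ) := by
    rw [← intervalIntegral.integral_const_mul]
    congr 1; ext x; ring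
  rw [this]
  ring
lemma fourierCoeff_clift_split {g : ℝ → ℝ} (hg : Function.Periodic g (2 * Real.pi))
    (hc : Continuous g) (n : ℤ) :
    fourierCoeff (clift g) n = (1 / (2 * Real.pi) : ℂ) *
      ((↑(∫ x in (0:ℝ)..(2 * Real.pi), g x * Real.cos (n * x)) : ℂ) -
       (↑(∫ x in (0:ℝ)..(2 * Real.pi), g x * Real.sin (n * x)) : ℂ) * Complex.I) := by
  rw [fourierCoeff_clift hg n]
  congr 1
  have hint : ∀ x : ℝ, Complex.exp (-(Complex.I * n * x)) * (g x : ℂ)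
      = (↑(g x * Real.cos (n * x)) : ℂ) - (↑(g x * Real.sin (n * x)) : ℂ) * Complex.I := by
    intro x
    have : -(Complex.I * n * x) = (↑(-((n:ℝ) * x)) : ℂ) * Complex.I := by push_cast; ring
    rw [this, Complex.exp_mul_I, ← Complex.ofReal_cos, ← Complex.ofReal_sin]
    push_cast
    rw [Complex.cos_neg, Complex.sin_neg]
    ring
  simp_rw [hint]
  rw [intervalIntegral.integral_sub, intervalIntegral.integral_mul_const,
    intervalIntegral.integral_ofReal, intervalIntegral.integral_ofReal]
  · exact (Complex.continuous_ofReal.comp (by fun_prop)).intervalIntegrable _ _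
  · exact ((Complex.continuous_ofReal.comp (by fun_prop)).mul continuous_const).intervalIntegrable _ _
lemma norm_I_mul_int_mul (n : ℤ) (z : ℂ) :
    ‖Complex.I * n * z‖ ^ 2 = (n : ℝ) ^ 2 * ‖z‖ ^ 2 := by
  rw [norm_mul, norm_mul, Complex.norm_I, one_mul,
    show ((n:ℂ)) = (((n:ℝ)):ℂ) by push_cast; ring]
  simp [Complex.norm_real, Real.norm_eq_abs, sq_abs, mul_pow]

end WirtingerHelpers

open Real intervalIntegral

theorem stmt_2 (q : ℝ → ℝ) (hq : ContDiff ℝ 2 q)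
    (hper : ∀ x, q (x + 2 * π) = q x)
    (a b : ℕ → ℝ)
    (ha : ∀ n, a n = (1 / π) * ∫ x in (0:ℝ)..(2 * π), q x * Real.cos (n * x))
    (hb : ∀ n, b n = (1 / π) * ∫ x in (0:ℝ)..(2 * π), q x * Real.sin (n * x))
    (heven : ∀ n, Even n → 2 ≤ n → a n = 0 ∧ b n = 0) :
    (∫ x in (0:ℝ)..(2 * π), (deriv (deriv q) x) ^ 2 - (deriv q x) ^ 2) ≥
      9 * (∫ x in (0:ℝ)..(2 * π), (deriv q x) ^ 2 - (q x) ^ 2) +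
        (9 / (2 * π)) * (∫ x in (0:ℝ)..(2 * π), q x) ^ 2 := by
  -- regularity facts
  have hq' : ContDiff ℝ (1 + 1 : WithTop ℕ∞) q := by
    rwa [show (1 + 1 : WithTop ℕ∞) = 2 by rfl]
  have hd1 : Differentiable ℝ q := (contDiff_succ_iff_deriv.mp hq').1
  have hq1 : ContDiff ℝ 1 (deriv q) := (contDiff_succ_iff_deriv.mp hq').2.2
  have hd2 : Differentiable ℝ (deriv q) := (contDiff_one_iff_deriv.mp hq1).1
  have hc0 : Continuous q := hq.continuous
  have hc1 : Continuous (deriv q) := hq1.continuous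
  have hc2 : Continuous (deriv (deriv q)) := (contDiff_one_iff_deriv.mp hq1).2
  have hper0 : Function.Periodic q (2 * π) := hper
  have hper1 : Function.Periodic (deriv q) (2 * π) := periodic_deriv_of_periodic hper0
  have hper2 : Function.Periodic (deriv (deriv q)) (2 * π) :=
    periodic_deriv_of_periodic hper1
  -- Fourier coefficients
  set c : ℤ → ℂ := fun n => fourierCoeff (clift q) n with hc
  set d : ℤ → ℝ := fun n => ‖c n‖ ^ 2 with hd
  have hc1eq : ∀ n : ℤ, fourierCoeff (clift (deriv q)) n = Complex.I * n * c n :=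
    fun n => fourierCoeff_clift_deriv hd1 hper0 hc1 n
  have hc2eq : ∀ n : ℤ, fourierCoeff (clift (deriv (deriv q))) n
      = Complex.I * n * (Complex.I * n * c n) := by
    intro n
    rw [fourierCoeff_clift_deriv hd2 hper1 hc2 n, hc1eq n]
  -- norms
  have hn1 : ∀ n : ℤ, ‖fourierCoeff (clift (deriv q)) n‖ ^ 2 = (n:ℝ)^2 * d n := by
    intro n; rw [hc1eq n, norm_I_mul_int_mul]
  have hn2 : ∀ n : ℤ, ‖fourierCoeff (clift (deriv (deriv q))) n‖ ^ 2
      = (n:ℝ)^2 * ((n:ℝ)^2 * d n) := by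
    intro n; rw [hc2eq n, norm_I_mul_int_mul, norm_I_mul_int_mul]
  -- Parseval for q, q', q''
  obtain ⟨S0, P0⟩ := parseval_clift hc0 hper0
  obtain ⟨S1, P1⟩ := parseval_clift hc1 hper1
  obtain ⟨S2, P2⟩ := parseval_clift hc2 hper2
  simp_rw [hn1] at S1 P1
  simp_rw [hn2] at S2 P2
  -- even coefficients vanish
  have hevenz : ∀ n : ℤ, Even n → n ≠ 0 → c n = 0 := by
    intro n hne hn0
    have hm2 : 2 ≤ n.natAbs := by
      rcases hne with ⟨k, rfl⟩
      omega
    obtain ⟨ha0, hb0⟩ := heven n.natAbs (Int.natAbs_even.mpr hne) hm2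
    have hπ : (1 / π : ℝ) ≠ 0 := one_div_ne_zero Real.pi_ne_zero
    have hQcos : (∫ x in (0:ℝ)..(2 * π), q x * Real.cos ((n.natAbs : ℝ) * x)) = 0 := by
      have h' := (ha n.natAbs).symm.trans ha0
      rcases mul_eq_zero.mp h' with h | h
      · exact absurd h hπ
      · exact h
    have hQsin : (∫ x in (0:ℝ)..(2 * π), q x * Real.sin ((n.natAbs : ℝ) * x)) = 0 := by
      have h' := (hb n.natAbs).symm.trans hb0
      rcases mul_eq_zero.mp h' with h | h
      · exact absurd h hπ
      · exact h
    have hcast : ((n:ℝ)) = ((n.natAbs : ℝ)) ∨ ((n:ℝ)) = -((n.natAbs : ℝ)) := by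
      rcases Int.natAbs_eq n with h | h
      · left
        conv_lhs => rw [h]
        exact Int.cast_natCast n.natAbs
      · right
        conv_lhs => rw [h]
        push_cast [Nat.cast_natAbs]
        ring
    have hcos : (∫ x in (0:ℝ)..(2 * π), q x * Real.cos ((n : ℝ) * x)) = 0 := by
      have h2 : (∫ x in (0:ℝ)..(2 * π), q x * Real.cos ((n : ℝ) * x))
          = ∫ x in (0:ℝ)..(2 * π), q x * Real.cos ((n.natAbs : ℝ) * x) := by
        apply intervalIntegral.integral_congr
        intro x _
        rcases hcast with h | h <;> rw [h]
        simp [neg_mul, Real.cos_neg]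
      rw [h2]; exact hQcos
    have hsin : (∫ x in (0:ℝ)..(2 * π), q x * Real.sin ((n : ℝ) * x)) = 0 := by
      rcases hcast with h | h
      · have h2 : (∫ x in (0:ℝ)..(2 * π), q x * Real.sin ((n : ℝ) * x))
            = ∫ x in (0:ℝ)..(2 * π), q x * Real.sin ((n.natAbs : ℝ) * x) := by
          apply intervalIntegral.integral_congr
          intro x _
          rw [h]
        rw [h2]; exact hQsin
      · have h2 : (∫ x in (0:ℝ)..(2 * π), q x * Real.sin ((n : ℝ) * x))
            = ∫ x in (0:ℝ)..(2 * π), -(q x * Real.sin ((n.natAbs : ℝ) * x)) := by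
          apply intervalIntegral.integral_congr
          intro x _
          rw [h]
          simp [neg_mul, Real.sin_neg]
        rw [h2, intervalIntegral.integral_neg, hQsin, neg_zero]
    rw [hc]
    simp only
    rw [fourierCoeff_clift_split hper0 hc0 n, hcos, hsin]
    simp
  -- value at 0
  have hd0 : (∫ x in (0:ℝ)..(2 * π), q x) ^ 2 = (2 * π)^2 * d 0 := by
    have hc0val : c 0 = ((((1 / (2 * π)) * ∫ x in (0:ℝ)..(2 * π), q x : ℝ)) : ℂ) := by
      rw [hc]
      simp only
      rw [fourierCoeff_clift_split hper0 hc0 0]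
      push_cast
      simp
    rw [hd]
    simp only
    rw [hc0val, Complex.norm_real, Real.norm_eq_abs, sq_abs, mul_pow]
    have hπ : (π : ℝ) ≠ 0 := Real.pi_ne_zero
    field_simp
  -- split the integrals in the goal
  have hi0 : IntervalIntegrable (fun x => q x ^ 2) volume 0 (2 * π) :=
    (hc0.pow 2).intervalIntegrable _ _
  have hi1 : IntervalIntegrable (fun x => deriv q x ^ 2) volume 0 (2 * π) :=
    (hc1.pow 2).intervalIntegrable _ _
  have hi2 : IntervalIntegrable (fun x => deriv (deriv q) x ^ 2) volume 0 (2 * π) :=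
    (hc2.pow 2).intervalIntegrable _ _
  rw [intervalIntegral.integral_sub hi2 hi1, intervalIntegral.integral_sub hi1 hi0,
    P0, P1, P2, hd0]
  -- now a pure inequality about sums
  set T0 : ℝ := ∑' n : ℤ, ‖fourierCoeff (clift q) n‖ ^ 2 with hT0
  set T1 : ℝ := ∑' n : ℤ, (n:ℝ) ^ 2 * d n with hT1
  set T2 : ℝ := ∑' n : ℤ, (n:ℝ) ^ 2 * ((n:ℝ) ^ 2 * d n) with hT2
  have hT0d : T0 = ∑' n : ℤ, d n := rfl
  have S0' : Summable d := S0
  have key : T2 - 10 * T1 + 9 * (∑' n : ℤ, d n) - 9 * d 0 ≥ 0 := by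
    set h : ℤ → ℝ := fun n =>
      (n:ℝ)^2 * ((n:ℝ)^2 * d n) - 10 * ((n:ℝ)^2 * d n) + 9 * d n with hh
    have Sh : Summable h := (S2.sub (S1.mul_left 10)).add (S0'.mul_left 9)
    have htsum : ∑' n, h n = T2 - 10 * T1 + 9 * (∑' n : ℤ, d n) := by
      rw [hh]
      rw [Summable.tsum_add (S2.sub (S1.mul_left 10)) (S0'.mul_left 9),
        Summable.tsum_sub S2 (S1.mul_left 10), tsum_mul_left, tsum_mul_left, ← hT1, ← hT2]
    have hsplit := Summable.tsum_eq_add_tsum_ite Sh 0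
    have hh0 : h 0 = 9 * d 0 := by norm_num [hh]
    have hrest : (∑' n : ℤ, if n = 0 then 0 else h n) ≥ 0 := by
      apply tsum_nonneg
      intro n
      by_cases hn : n = 0
      · simp [hn]
      · simp only [hn, if_false]
        rcases Int.even_or_odd n with he | ho
        · have : c n = 0 := hevenz n he hn
          have : d n = 0 := by rw [hd]; simp [this]
          simp [hh, this]
        · -- odd n : coefficient (n²-1)(n²-9) ≥ 0
          have hdn : 0 ≤ d n := by rw [hd]; positivity
          have hm : ((n.natAbs:ℝ)) = |(n:ℝ)| := by
            rw [Nat.cast_natAbs]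
            exact Int.cast_abs
          have hoddm : Odd n.natAbs := Int.natAbs_odd.mpr ho
          have hsq : ((n:ℝ)^2 - 1) * ((n:ℝ)^2 - 9) ≥ 0 := by
            rcases eq_or_ne n.natAbs 1 with h1 | h1
            · have habs : |(n:ℝ)| = 1 := by rw [← hm, h1]; norm_num
              have : (n:ℝ)^2 = 1 := by rw [← sq_abs, habs]; norm_num
              rw [this]; norm_num
            · have h3 : 3 ≤ n.natAbs := by
                rcases hoddm with ⟨k, hk⟩; omega
              have habs : (3:ℝ) ≤ |(n:ℝ)| := by
                rw [← hm]; exact_mod_cast h3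
              have h9 : (9:ℝ) ≤ (n:ℝ)^2 := by
                rw [← sq_abs]; nlinarith [abs_nonneg ((n:ℝ))]
              nlinarith
          simp only [hh]
          nlinarith [hdn, hsq]
    linarith [hsplit.symm.trans htsum, hrest, hh0]
  rw [show (9/(2*π)) * ((2*π)^2 * d 0) = 18*π*(d 0) by
    field_simp; ring]
  have key2 : 0 ≤ (2*π) * (T2 - 10*T1 + 9*(∑' n : ℤ, d n) - 9*(d 0)) :=
    mul_nonneg (by positivity) key
  rw [ge_iff_le, hT0d]
  nlinarith [key2]
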